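/- Let α ∈ ℂ with Re α > 0 and let φ be a Schwartz function on ℝⁿ. Then for each choice of sign ±, the function y ↦ (y_n − |y'|²)_±^{α−1} φ(y) is Lebesgue integrable on ℝⁿ; in particular, p_{α±}(y) = (1/Γ(α)) (y_n − |y'|²)_±^{α−1} defines a regular tempered distribution on ℝⁿ. -/

import Mathlib

open MeasureTheory Complex

noncomputable section

/-- ℝⁿ realized as ℝ^{n-1} × ℝ, points written x = (x', xₙ). -/
abbrev Rn (n : ℕ) : Type := EuclideanSpace ℝ (Fin (n - 1)) × ℝ

/-- (t)₊^λ = exp(λ log t) for t > 0 (σ = true), (t)₋^λ = exp(λ log(−t)) for t < 0 (σ = false). -/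
def ppow (σ : Bool) (t : ℝ) (l : ℂ) : ℂ :=
  if σ then (if 0 < t then Complex.exp (l * Real.log t) else 0)
  else (if t < 0 then Complex.exp (l * Real.log (-t)) else 0)

/-- The parabolic fractional integral P_±^α f. -/
def parP (n : ℕ) (σ : Bool) (α : ℂ) (f : Rn n → ℂ) (x : Rn n) : ℂ :=
  (1 / Complex.Gamma α) * ∫ y : Rn n, ppow σ (y.2 - ‖y.1‖ ^ 2) (α - 1) * f (x - y)

/-- auxiliary elementary inequality -/
lemma aux_one_add_pow_le (t : ℝ) (ht : 0 ≤ t) (K : ℕ) : (1 + t) ^ K ≤ 2 ^ K * (1 + t ^ K) := by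
  have h1 : (1 + t) ^ K ≤ (2 * max 1 t) ^ K := by
    apply pow_le_pow_left₀ (by linarith)
    rcases le_total t 1 with h | h
    · rw [max_eq_left h]; linarith
    · rw [max_eq_right h]; linarith
  have h2 : (max 1 t) ^ K ≤ 1 + t ^ K := by
    rcases le_total t 1 with h | h
    · rw [max_eq_left h, one_pow]
      have : 0 ≤ t ^ K := pow_nonneg ht K
      linarith
    · rw [max_eq_right h]
      have : (0:ℝ) ≤ 1 := zero_le_one
      linarith
  calc (1 + t) ^ K ≤ (2 * max 1 t) ^ K := h1
    _ = 2 ^ K * (max 1 t) ^ K := mul_pow 2 _ K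
    _ ≤ 2 ^ K * (1 + t ^ K) := by
        have : (0:ℝ) < 2 ^ K := by positivity
        nlinarith

lemma ppow_measurable (σ : Bool) (l : ℂ) : Measurable (fun t : ℝ => ppow σ t l) := by
  have hme : Measurable fun t : ℝ => Complex.exp (l * (Real.log t : ℂ)) :=
    Complex.measurable_exp.comp (measurable_const.mul
      (Complex.measurable_ofReal.comp Real.measurable_log))
  have hme' : Measurable fun t : ℝ => Complex.exp (l * (Real.log (-t) : ℂ)) :=
    Complex.measurable_exp.comp (measurable_const.mul
      (Complex.measurable_ofReal.comp (Real.measurable_log.comp measurable_neg)))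
  cases σ with
  | true =>
      show Measurable fun t : ℝ => if 0 < t then Complex.exp (l * (Real.log t : ℂ)) else 0
      exact Measurable.ite measurableSet_Ioi hme measurable_const
  | false =>
      show Measurable fun t : ℝ => if t < 0 then Complex.exp (l * (Real.log (-t) : ℂ)) else 0
      exact Measurable.ite measurableSet_Iio hme' measurable_const

lemma ppow_norm_le (σ : Bool) (t : ℝ) (l : ℂ) : ‖ppow σ t l‖ ≤ |t| ^ l.re := by
  have key : ∀ s : ℝ, 0 < s → ‖Complex.exp (l * (Real.log s : ℂ))‖ = s ^ l.re := by
    intro s hs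
    rw [Complex.norm_exp]
    congr 1
    · rw [Real.rpow_def_of_pos hs]
      simp [Complex.mul_re, mul_comm]
  cases σ with
  | true =>
      simp only [ppow, if_true]
      split_ifs with h
      · rw [key t h, abs_of_pos h]
      · simpa using Real.rpow_nonneg (abs_nonneg t) l.re
  | false =>
      simp only [ppow, Bool.false_eq_true, if_false]
      split_ifs with h
      · rw [key (-t) (by linarith), abs_of_neg h]
      · simpa using Real.rpow_nonneg (abs_nonneg t) l.re

/-- For Re α > 0 and φ Schwartz, the function y ↦ (yₙ − |y'|²)_±^{α−1} φ(y) is Lebesgue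
integrable on ℝⁿ; hence p_{α±} defines a regular tempered distribution. -/
theorem kernel_mul_schwartz_integrable (n : ℕ) (hn : 2 ≤ n) (σ : Bool)
    (α : ℂ) (hα : 0 < α.re) (φ : SchwartzMap (Rn n) ℂ) :
    Integrable (fun y : Rn n => ppow σ (y.2 - ‖y.1‖ ^ 2) (α - 1) * φ y) := by
  set E := EuclideanSpace ℝ (Fin (n - 1))
  set a : ℝ := α.re with ha_def
  -- measurability of the function
  have hmeas : AEStronglyMeasurable
      (fun y : Rn n => ppow σ (y.2 - ‖y.1‖ ^ 2) (α - 1) * φ y) volume := by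
    have h1 : Measurable fun y : Rn n => ppow σ (y.2 - ‖y.1‖ ^ 2) (α - 1) :=
      (ppow_measurable σ (α - 1)).comp
        (measurable_snd.sub ((measurable_norm.comp measurable_fst).pow_const 2))
    exact (h1.aestronglyMeasurable).mul φ.continuous.aestronglyMeasurable
  -- the one-dimensional kernel near the singular surface
  set v : ℝ → ℝ := Set.indicator (Set.Icc (-1) 1) (fun s => |s| ^ (a - 1)) with hv_def
  have hv_nonneg : ∀ s, 0 ≤ v s :=
    fun s => Set.indicator_nonneg (fun x _ => Real.rpow_nonneg (abs_nonneg x) _) s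
  have hv_int : Integrable v := by
    have hI01 : IntervalIntegrable (fun s : ℝ => |s| ^ (a - 1)) volume 0 1 := by
      have h0 : IntervalIntegrable (fun s : ℝ => s ^ (a - 1)) volume 0 1 :=
        intervalIntegral.intervalIntegrable_rpow' (by linarith)
      rw [intervalIntegrable_iff_integrableOn_Ioc_of_le (by norm_num)] at h0 ⊢
      exact h0.congr_fun (fun s hs => by rw [abs_of_pos hs.1]) measurableSet_Ioc
    have hIneg : IntervalIntegrable (fun s : ℝ => |s| ^ (a - 1)) volume (-1) 0 := by
      have := ((IntervalIntegrable.iff_comp_neg (f := fun s : ℝ => |s| ^ (a - 1)) (a := 0) (b := 1) (by simp)).mp hI01)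
      simp only [abs_neg, neg_zero, neg_neg] at this
      exact this.symm
    have hI : IntervalIntegrable (fun s : ℝ => |s| ^ (a - 1)) volume (-1) 1 :=
      hIneg.trans hI01
    rw [intervalIntegrable_iff_integrableOn_Ioc_of_le (by norm_num)] at hI
    have hIcc : IntegrableOn (fun s : ℝ => |s| ^ (a - 1)) (Set.Icc (-1) 1) volume := by
      rwa [integrableOn_Icc_iff_integrableOn_Ioc]
    exact hIcc.integrable_indicator measurableSet_Icc
  -- decay of φ in the y' variable
  set k : ℕ := Module.finrank ℝ E + 1 with hk_def
  set u : E → ℝ := fun x => (1 + ‖x‖) ^ (-(k : ℝ)) with hu_def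
  have hu_nonneg : ∀ x, 0 ≤ u x := fun x => Real.rpow_nonneg (by positivity) _
  have hu_int : Integrable u := by
    apply integrable_one_add_norm
    rw [hk_def]; push_cast; linarith
  obtain ⟨C₀, hC₀pos, hC₀⟩ := φ.decay k 0
  obtain ⟨C₁, hC₁pos, hC₁⟩ := φ.decay 0 0
  set C : ℝ := 2 ^ k * (C₁ + C₀) with hC_def
  have hC_nonneg : 0 ≤ C := by positivity
  have hφu : ∀ y : Rn n, ‖φ y‖ ≤ C * u y.1 := by
    intro y
    have hb : ∀ x, ‖φ x‖ = ‖iteratedFDeriv ℝ 0 (⇑φ) x‖ := by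
      intro x; rw [norm_iteratedFDeriv_zero]
    have h1 : ‖φ y‖ * (1 + ‖y.1‖) ^ k ≤ C := by
      have hfst : ‖y.1‖ ≤ ‖y‖ := norm_fst_le y
      have h2 : (1 + ‖y.1‖) ^ k ≤ (1 + ‖y‖) ^ k :=
        pow_le_pow_left₀ (by positivity) (by linarith) k
      have h3 : (1 + ‖y‖) ^ k ≤ 2 ^ k * (1 + ‖y‖ ^ k) :=
        aux_one_add_pow_le ‖y‖ (norm_nonneg y) k
      have h4 : ‖φ y‖ ≤ C₁ := by
        have := hC₁ y; rw [← hb y] at this; simpa using this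
      have h5 : ‖y‖ ^ k * ‖φ y‖ ≤ C₀ := by
        have := hC₀ y; rwa [← hb y] at this
      have hφnn : 0 ≤ ‖φ y‖ := norm_nonneg _
      calc ‖φ y‖ * (1 + ‖y.1‖) ^ k ≤ ‖φ y‖ * (1 + ‖y‖) ^ k := by
            exact mul_le_mul_of_nonneg_left h2 hφnn
        _ ≤ ‖φ y‖ * (2 ^ k * (1 + ‖y‖ ^ k)) := mul_le_mul_of_nonneg_left h3 hφnn
        _ = 2 ^ k * (‖φ y‖ + ‖y‖ ^ k * ‖φ y‖) := by ring
        _ ≤ 2 ^ k * (C₁ + C₀) := by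
            have : (0:ℝ) < 2 ^ k := by positivity
            nlinarith
        _ = C := hC_def.symm
    have hpos : (0:ℝ) < (1 + ‖y.1‖) ^ k := by positivity
    have hu_eq : u y.1 = ((1 + ‖y.1‖) ^ k)⁻¹ := by
      show (1 + ‖y.1‖) ^ (-(k : ℝ)) = ((1 + ‖y.1‖) ^ k)⁻¹
      rw [Real.rpow_neg (by positivity), Real.rpow_natCast]
    rw [hu_eq, ← div_eq_mul_inv, le_div_iff₀ hpos]
    exact h1
  -- integrability of the near-surface majorant via a measure-preserving shear
  have hg1_int : Integrable (fun y : Rn n => u y.1 * v (y.2 - ‖y.1‖ ^ 2)) volume := by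
    have hprod : Integrable (fun p : E × ℝ => u p.1 * v p.2) (volume.prod volume) :=
      Integrable.mul_prod hu_int hv_int
    have hT : MeasurePreserving (fun p : E × ℝ => (p.1, p.2 - ‖p.1‖ ^ 2))
        (volume.prod volume) (volume.prod volume) := by
      apply (MeasurePreserving.id volume).skew_product
        (g := fun (x : E) (t : ℝ) => t - ‖x‖ ^ 2)
      · exact measurable_snd.sub ((measurable_norm.comp measurable_fst).pow_const 2)
      · exact Filter.Eventually.of_forall fun x =>
          (measurePreserving_sub_right volume (‖x‖ ^ 2)).map_eq
    have h2 := (hT.integrable_comp hprod.aestronglyMeasurable).mpr hprod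
    rw [Measure.volume_eq_prod]
    exact h2
  -- integrability of the polynomial-weight majorant
  set m : ℕ := ⌈a⌉₊ with hm_def
  have haar : (volume : Measure (Rn n)).IsAddHaarMeasure := by
    rw [Measure.volume_eq_prod]; infer_instance
  have htg : (volume : Measure (Rn n)).HasTemperateGrowth := inferInstance
  have hg2_int : Integrable (fun y : Rn n => (1 + ‖y‖) ^ (2 * m) * ‖φ y‖) volume := by
    have hmaj : Integrable (fun y : Rn n =>
        2 ^ (2 * m) * ‖φ y‖ + 2 ^ (2 * m) * (‖y‖ ^ (2 * m) * ‖φ y‖)) volume :=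
      ((φ.integrable.norm).const_mul _).add ((φ.integrable_pow_mul volume (2 * m)).const_mul _)
    apply hmaj.mono'
    · exact (((continuous_const.add continuous_norm).pow _).mul
        φ.continuous.norm).aestronglyMeasurable
    · refine Filter.Eventually.of_forall fun y => ?_
      have h1 : (1 + ‖y‖) ^ (2 * m) ≤ 2 ^ (2 * m) * (1 + ‖y‖ ^ (2 * m)) :=
        aux_one_add_pow_le ‖y‖ (norm_nonneg y) _
      have hφnn : 0 ≤ ‖φ y‖ := norm_nonneg _
      have : (1 + ‖y‖) ^ (2 * m) * ‖φ y‖ ≤ 2 ^ (2 * m) * (1 + ‖y‖ ^ (2 * m)) * ‖φ y‖ :=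
        mul_le_mul_of_nonneg_right h1 hφnn
      rw [Real.norm_of_nonneg (by positivity)]
      calc (1 + ‖y‖) ^ (2 * m) * ‖φ y‖
          ≤ 2 ^ (2 * m) * (1 + ‖y‖ ^ (2 * m)) * ‖φ y‖ := this
        _ = 2 ^ (2 * m) * ‖φ y‖ + 2 ^ (2 * m) * (‖y‖ ^ (2 * m) * ‖φ y‖) := by ring
  -- the full majorant
  have hmaj_int : Integrable (fun y : Rn n =>
      C * (u y.1 * v (y.2 - ‖y.1‖ ^ 2)) + (1 + ‖y‖) ^ (2 * m) * ‖φ y‖) volume :=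
    (hg1_int.const_mul C).add hg2_int
  apply hmaj_int.mono' hmeas
  refine Filter.Eventually.of_forall fun y => ?_
  set s : ℝ := y.2 - ‖y.1‖ ^ 2 with hs_def
  have hkey : ‖ppow σ s (α - 1) * φ y‖ ≤ |s| ^ (a - 1) * ‖φ y‖ := by
    rw [norm_mul]
    have := ppow_norm_le σ s (α - 1)
    have h' : (α - 1).re = a - 1 := by simp [ha_def]
    rw [h'] at this
    exact mul_le_mul_of_nonneg_right this (norm_nonneg _)
  have hg1_nonneg : 0 ≤ C * (u y.1 * v s) :=
    mul_nonneg hC_nonneg (mul_nonneg (hu_nonneg _) (hv_nonneg _))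
  have hg2_nonneg : 0 ≤ (1 + ‖y‖) ^ (2 * m) * ‖φ y‖ := by positivity
  rcases le_or_gt |s| 1 with hcase | hcase
  · -- near the surface
    have hvs : v s = |s| ^ (a - 1) :=
      Set.indicator_of_mem (Set.mem_Icc.mpr (abs_le.mp hcase)) _
    calc ‖ppow σ s (α - 1) * φ y‖ ≤ |s| ^ (a - 1) * ‖φ y‖ := hkey
      _ ≤ |s| ^ (a - 1) * (C * u y.1) :=
          mul_le_mul_of_nonneg_left (hφu y) (Real.rpow_nonneg (abs_nonneg s) _)
      _ = C * (u y.1 * v s) := by rw [hvs]; ring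
      _ ≤ C * (u y.1 * v s) + (1 + ‖y‖) ^ (2 * m) * ‖φ y‖ := le_add_of_nonneg_right hg2_nonneg
  · -- away from the surface
    have h1 : |s| ^ (a - 1) ≤ |s| ^ (m : ℝ) := by
      apply Real.rpow_le_rpow_of_exponent_le hcase.le
      have : a ≤ (m : ℝ) := Nat.le_ceil a
      linarith
    have h2 : |s| ^ (m : ℝ) = |s| ^ m := Real.rpow_natCast _ m
    have h3 : |s| ≤ (1 + ‖y‖) ^ 2 := by
      have hfst : ‖y.1‖ ≤ ‖y‖ := norm_fst_le y
      have hsnd : |y.2| ≤ ‖y‖ := by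
        have := norm_snd_le y; rwa [Real.norm_eq_abs] at this
      have habs : |s| ≤ |y.2| + ‖y.1‖ ^ 2 := by
        rw [hs_def]
        calc |y.2 - ‖y.1‖ ^ 2| ≤ |y.2| + |‖y.1‖ ^ 2| := abs_sub _ _
          _ = |y.2| + ‖y.1‖ ^ 2 := by rw [_root_.abs_of_nonneg (sq_nonneg ‖y.1‖)]
      have h5 : ‖y.1‖ ^ 2 ≤ ‖y‖ ^ 2 := pow_le_pow_left₀ (norm_nonneg _) hfst 2
      have hny : 0 ≤ ‖y‖ := norm_nonneg y
      have hsq : (1 + ‖y‖) ^ 2 = 1 + 2 * ‖y‖ + ‖y‖ ^ 2 := by ring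
      linarith
    have h4 : |s| ^ m ≤ (1 + ‖y‖) ^ (2 * m) := by
      calc |s| ^ m ≤ ((1 + ‖y‖) ^ 2) ^ m := pow_le_pow_left₀ (abs_nonneg s) h3 m
        _ = (1 + ‖y‖) ^ (2 * m) := by rw [← pow_mul]
    calc ‖ppow σ s (α - 1) * φ y‖ ≤ |s| ^ (a - 1) * ‖φ y‖ := hkey
      _ ≤ (1 + ‖y‖) ^ (2 * m) * ‖φ y‖ := by
          apply mul_le_mul_of_nonneg_right _ (norm_nonneg _)
          calc |s| ^ (a - 1) ≤ |s| ^ (m : ℝ) := h1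
            _ = |s| ^ m := h2
            _ ≤ (1 + ‖y‖) ^ (2 * m) := h4
      _ ≤ C * (u y.1 * v s) + (1 + ‖y‖) ^ (2 * m) * ‖φ y‖ := le_add_of_nonneg_left hg1_nonneg
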